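/- Let k be a field and Γ₊ the category of finite pointed sets with basepoint-preserving maps as morphisms. Let T* : Γ₊ → Vect_k be the reduced k-linear span functor, T*(X) = k[X]/k·x₀. Then the functor from Vect_k to the functor category Fun(Γ₊, Vect_k) sending a k-vector space W to the functor X ↦ W ⊗_k T*(X) is fully faithful; that is, for any k-vector spaces W, W′, the natural map Hom_k(W, W′) → Hom_{Fun(Γ₊, Vect_k)}(W ⊗ T*, W′ ⊗ T*) is bijective. -/

import Mathlib

open CategoryTheory

open scoped TensorProduct

/-- The category `Γ₊` of finite pointed sets, with basepoint-preserving maps as morphisms. -/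
abbrev GammaPlus : Type 1 := ObjectProperty.FullSubcategory (fun X : Pointed => Finite X.X)

/-- The reduced `k`-linear span functor `T* : Γ₊ → Vect_k`, `X ↦ k[X]/k·x₀`. -/
noncomputable def Tstar (k : Type) [Field k] : GammaPlus ⥤ ModuleCat.{0} k where
  obj X := ModuleCat.of k
    ((X.obj.X →₀ k) ⧸ Submodule.span k {Finsupp.single X.obj.point (1 : k)})
  map {X Y} f := ModuleCat.ofHom <| Submodule.mapQ _ _ (Finsupp.lmapDomain k k f.hom.toFun)
    (by
      rw [Submodule.span_le]
      rintro x hx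
      simp only [Set.mem_singleton_iff] at hx
      subst hx
      simp only [SetLike.mem_coe, Submodule.mem_comap, Finsupp.lmapDomain_apply,
        Finsupp.mapDomain_single, f.hom.map_point]
      exact Submodule.mem_span_singleton_self _)
  map_id X := by
    apply ModuleCat.hom_ext
    apply Submodule.linearMap_qext
    apply Finsupp.lhom_ext
    intro a b
    show Submodule.Quotient.mk (Finsupp.mapDomain _root_.id (Finsupp.single a b)) = _
    rw [Finsupp.mapDomain_single]
    rfl
  map_comp {X Y Z} f g := by
    apply ModuleCat.hom_ext
    apply Submodule.linearMap_qext
    apply Finsupp.lhom_ext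
    intro a b
    show Submodule.Quotient.mk (Finsupp.mapDomain (f ≫ g).hom.toFun (Finsupp.single a b)) = _
    rw [Finsupp.mapDomain_single]
    show _ = Submodule.Quotient.mk
      (Finsupp.mapDomain g.hom.toFun (Finsupp.mapDomain f.hom.toFun (Finsupp.single a b)))
    rw [Finsupp.mapDomain_single, Finsupp.mapDomain_single]
    rfl

/-- The functor `X ↦ W ⊗ T*(X)`, for a fixed `k`-vector space `W`. -/
noncomputable def tensorTstar (k : Type) [Field k] (W : Type) [AddCommGroup W] [Module k W] :
    GammaPlus ⥤ ModuleCat.{0} k where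
  obj X := ModuleCat.of k (W ⊗[k] ((Tstar k).obj X))
  map {X Y} f := ModuleCat.ofHom (TensorProduct.map LinearMap.id ((Tstar k).map f).hom)
  map_id X := by
    try dsimp only
    rw [(Tstar k).map_id]
    apply ModuleCat.hom_ext
    apply TensorProduct.ext'
    intro w t
    rfl
  map_comp {X Y Z} f g := by
    try dsimp only
    rw [(Tstar k).map_comp]
    apply ModuleCat.hom_ext
    apply TensorProduct.ext'
    intro w t
    rfl

/-- The natural transformation `W ⊗ T* ⟶ W' ⊗ T*` induced by a linear map `f : W → W'`. -/
noncomputable def tensorTstarMap (k : Type) [Field k] (W W' : Type) [AddCommGroup W]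
    [Module k W] [AddCommGroup W'] [Module k W'] (f : W →ₗ[k] W') :
    tensorTstar k W ⟶ tensorTstar k W' where
  app X := ModuleCat.ofHom (TensorProduct.map f LinearMap.id)
  naturality {X Y} g := by
    apply ModuleCat.hom_ext
    apply TensorProduct.ext'
    intro w t
    rfl

noncomputable section Stmt8Aux

namespace Stmt8

/-- The two-point pointed set, with basepoint `false`. -/
def X2 : GammaPlus := ⟨{ X := Bool, point := false }, inferInstanceAs (Finite Bool)⟩

variable (k : Type) [Field k]

/-- The reduced span of `X2`, as a module. -/
abbrev M : Type :=
  (Bool →₀ k) ⧸ Submodule.span k {Finsupp.single (false : Bool) (1 : k)}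

/-- The generator of `M k`. -/
def e : M k := Submodule.Quotient.mk (Finsupp.single true 1)

/-- The coordinate functional on `M k`. -/
def φ : M k →ₗ[k] k :=
  Submodule.liftQ _ (Finsupp.lapply true) (by
    rw [Submodule.span_le]
    rintro x hx
    simp only [Set.mem_singleton_iff] at hx
    subst hx
    simp [LinearMap.mem_ker])

lemma mk_eq (g : Bool →₀ k) :
    (Submodule.Quotient.mk g : M k) = g true • e k := by
  rw [e, ← Submodule.Quotient.mk_smul]
  rw [Submodule.Quotient.eq]
  have hg : g - g true • Finsupp.single true 1
      = g false • Finsupp.single (false : Bool) (1 : k) := by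
    ext a
    cases a <;> simp
  rw [hg]
  exact Submodule.smul_mem _ _ (Submodule.mem_span_singleton_self _)

lemma φ_mk (g : Bool →₀ k) : φ k (Submodule.Quotient.mk g) = g true := rfl

lemma φ_e : φ k (e k) = 1 := by simp [e, φ_mk]

variable (W : Type) [AddCommGroup W] [Module k W]

/-- The splitting `W ⊗ M k → W`. -/
def ψ : W ⊗[k] M k →ₗ[k] W :=
  TensorProduct.lift (((LinearMap.lsmul k W).comp (φ k)).flip)

@[simp] lemma ψ_tmul (w : W) (m : M k) : ψ k W (w ⊗ₜ m) = φ k m • w := rfl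

lemma tensor_eq (z : W ⊗[k] M k) : z = ψ k W z ⊗ₜ e k := by
  induction z using TensorProduct.induction_on with
  | zero => simp
  | tmul w m =>
    obtain ⟨g, rfl⟩ := Submodule.Quotient.mk_surjective _ m
    rw [ψ_tmul, φ_mk, mk_eq, TensorProduct.tmul_smul, TensorProduct.smul_tmul']
  | add z1 z2 h1 h2 =>
    rw [map_add, TensorProduct.add_tmul]
    exact congrArg₂ (· + ·) h1 h2

/-- The pointed map `X2 ⟶ X` sending `true` to `a`. -/
def toX (X : GammaPlus) (a : X.obj.X) : X2 ⟶ X :=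
  ObjectProperty.homMk ⟨fun c => bif c then a else X.obj.point, rfl⟩

lemma Tstar_map_mk {X Y : GammaPlus} (f : X ⟶ Y) (g : X.obj.X →₀ k) :
    ((Tstar k).map f).hom (Submodule.Quotient.mk g)
      = Submodule.Quotient.mk (Finsupp.mapDomain f.hom.toFun g) := by
  show Submodule.Quotient.mk ((Finsupp.lmapDomain k k f.hom.toFun) g) = _
  rw [Finsupp.lmapDomain_apply]

end Stmt8

end Stmt8Aux

/-- The functor `Vect_k → Fun(Γ₊, Vect_k)`, `W ↦ W ⊗ T*`, is fully
faithful: for any `k`-vector spaces `W`, `W'` the natural map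
`Hom_k(W, W') → Hom(W ⊗ T*, W' ⊗ T*)` is bijective. -/
theorem stmt_8 (k : Type) [Field k] (W W' : Type) [AddCommGroup W] [Module k W]
    [AddCommGroup W'] [Module k W'] :
    Function.Bijective (fun f : W →ₗ[k] W' => tensorTstarMap k W W' f) := by
  constructor
  · intro f f' h
    ext w
    have h2 : (tensorTstarMap k W W' f).app Stmt8.X2
        = (tensorTstarMap k W W' f').app Stmt8.X2 :=
      congrArg (fun η => η.app Stmt8.X2) h
    have h2' : (TensorProduct.map f LinearMap.id : W ⊗[k] Stmt8.M k →ₗ[k] W' ⊗[k] Stmt8.M k)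
        = TensorProduct.map f' LinearMap.id := congrArg ModuleCat.Hom.hom h2
    have h3 := congrArg (fun L : W ⊗[k] Stmt8.M k →ₗ[k] W' ⊗[k] Stmt8.M k =>
      Stmt8.ψ k W' (L (w ⊗ₜ[k] Stmt8.e k))) h2'
    simpa [Stmt8.φ_e] using h3
  · intro η
    let appX2 : W ⊗[k] Stmt8.M k →ₗ[k] W' ⊗[k] Stmt8.M k := (η.app Stmt8.X2).hom
    let f : W →ₗ[k] W' :=
      (Stmt8.ψ k W') ∘ₗ appX2 ∘ₗ ((TensorProduct.mk k W (Stmt8.M k)).flip (Stmt8.e k))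
    have hf : ∀ w : W, appX2 (w ⊗ₜ[k] Stmt8.e k) = f w ⊗ₜ[k] Stmt8.e k := by
      intro w
      conv_lhs => rw [Stmt8.tensor_eq k W' (appX2 (w ⊗ₜ[k] Stmt8.e k))]
      rfl
    refine ⟨f, ?_⟩
    apply NatTrans.ext
    funext X
    show (tensorTstarMap k W W' f).app X = η.app X
    apply ModuleCat.hom_ext
    apply TensorProduct.ext'
    intro w t
    have key : ∀ a : X.obj.X,
        (η.app X).hom (w ⊗ₜ[k] (Submodule.Quotient.mk (Finsupp.single a 1) :
            (X.obj.X →₀ k) ⧸ Submodule.span k {Finsupp.single X.obj.point (1 : k)}))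
          = f w ⊗ₜ[k] Submodule.Quotient.mk (Finsupp.single a 1) := by
      intro a
      have hTe : ((Tstar k).map (Stmt8.toX X a)).hom (Stmt8.e k)
          = Submodule.Quotient.mk (Finsupp.single a 1) := by
        erw [Stmt8.e, Stmt8.Tstar_map_mk, Finsupp.mapDomain_single]
        rfl
      have h4' : (η.app X).hom.comp ((tensorTstar k W).map (Stmt8.toX X a)).hom
          = ((tensorTstar k W').map (Stmt8.toX X a)).hom.comp (η.app Stmt8.X2).hom := by
        rw [← ModuleCat.hom_comp, ← ModuleCat.hom_comp]
        exact congrArg ModuleCat.Hom.hom (η.naturality (Stmt8.toX X a))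
      have h4 := LinearMap.congr_fun h4' (w ⊗ₜ[k] Stmt8.e k)
      have h5 : ((tensorTstar k W).map (Stmt8.toX X a)).hom (w ⊗ₜ[k] Stmt8.e k)
          = w ⊗ₜ[k] (Submodule.Quotient.mk (Finsupp.single a 1) :
            (X.obj.X →₀ k) ⧸ Submodule.span k {Finsupp.single X.obj.point (1 : k)}) := by
        show TensorProduct.map LinearMap.id ((Tstar k).map (Stmt8.toX X a)).hom
            (w ⊗ₜ[k] Stmt8.e k) = _
        erw [TensorProduct.map_tmul, hTe]
        rfl
      have h6 : ((tensorTstar k W').map (Stmt8.toX X a)).hom (f w ⊗ₜ[k] Stmt8.e k)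
          = f w ⊗ₜ[k] (Submodule.Quotient.mk (Finsupp.single a 1) :
            (X.obj.X →₀ k) ⧸ Submodule.span k {Finsupp.single X.obj.point (1 : k)}) := by
        show TensorProduct.map LinearMap.id ((Tstar k).map (Stmt8.toX X a)).hom
            (f w ⊗ₜ[k] Stmt8.e k) = _
        erw [TensorProduct.map_tmul, hTe]
        rfl
      calc (η.app X).hom (w ⊗ₜ[k] (Submodule.Quotient.mk (Finsupp.single a 1) :
              (X.obj.X →₀ k) ⧸ Submodule.span k {Finsupp.single X.obj.point (1 : k)}))
          = (η.app X).hom (((tensorTstar k W).map (Stmt8.toX X a)).hom (w ⊗ₜ[k] Stmt8.e k)) :=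
            congrArg _ h5.symm
        _ = ((tensorTstar k W').map (Stmt8.toX X a)).hom ((η.app Stmt8.X2).hom (w ⊗ₜ[k] Stmt8.e k)) := h4
        _ = ((tensorTstar k W').map (Stmt8.toX X a)).hom (f w ⊗ₜ[k] Stmt8.e k) := congrArg _ (hf w)
        _ = (show (tensorTstar k W').obj X from f w ⊗ₜ[k] Submodule.Quotient.mk (Finsupp.single a 1)) := h6
    show TensorProduct.map f LinearMap.id (w ⊗ₜ[k] t) = (η.app X).hom (w ⊗ₜ[k] t)
    obtain ⟨g, rfl⟩ := Submodule.Quotient.mk_surjective _ t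
    induction g using Finsupp.induction_linear with
    | zero =>
      erw [TensorProduct.tmul_zero, map_zero, map_zero]
      rfl
    | add g1 g2 ih1 ih2 =>
      erw [Submodule.Quotient.mk_add, TensorProduct.tmul_add, map_add, map_add, ih1, ih2]
      rfl
    | single a b =>
      have hs : (Finsupp.single a b : X.obj.X →₀ k) = b • Finsupp.single a 1 := by
        rw [Finsupp.smul_single, smul_eq_mul, mul_one]
      erw [hs, Submodule.Quotient.mk_smul, TensorProduct.tmul_smul, map_smul, map_smul, key a,
        TensorProduct.map_tmul]
      rfl
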